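/- Let 0 < α ≤ 2 and let C be a real number. Then the function f(x) = (4π²/x² + C²)^{α/2} − (π²/x² + C²)^{α/2} is monotonically decreasing on (0, ∞); that is, for all 0 < x₁ ≤ x₂ one has f(x₂) ≤ f(x₁). -/
import Mathlib


open Real

lemma gap_aux_monotone (p c : ℝ) (hp : 0 < p) (hp1 : p ≤ 1) (hc : 0 ≤ c)
    {a b : ℝ} (ha : 0 < a) (hab : a ≤ b) :
    (4 * a + c) ^ p - (a + c) ^ p ≤ (4 * b + c) ^ p - (b + c) ^ p := by
  have key : MonotoneOn (fun t : ℝ => (4 * t + c) ^ p - (t + c) ^ p) (Set.Ici a) := by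
    apply monotoneOn_of_hasDerivWithinAt_nonneg (convex_Ici a)
      (f' := fun t => p * (4 * t + c) ^ (p - 1) * 4 - p * (t + c) ^ (p - 1) * 1)
    · -- continuity
      apply ContinuousOn.sub
      · exact (Real.continuous_rpow_const hp.le).comp_continuousOn
          (by fun_prop)
      · exact (Real.continuous_rpow_const hp.le).comp_continuousOn
          (by fun_prop)
    · intro t ht
      rw [interior_Ici] at ht
      have ht0 : 0 < t := lt_of_le_of_lt ha.le ht
      have h1 : HasDerivAt (fun t : ℝ => (4 * t + c) ^ p)
          (p * (4 * t + c) ^ (p - 1) * 4) t := by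
        have hb : HasDerivAt (fun t : ℝ => 4 * t + c) 4 t := by
          simpa using ((hasDerivAt_id t).const_mul 4).add_const c
        exact (Real.hasDerivAt_rpow_const (Or.inl (by positivity))).comp t hb
      have h2 : HasDerivAt (fun t : ℝ => (t + c) ^ p)
          (p * (t + c) ^ (p - 1) * 1) t := by
        have hb : HasDerivAt (fun t : ℝ => t + c) 1 t := (hasDerivAt_id t).add_const c
        exact (Real.hasDerivAt_rpow_const (Or.inl (by positivity))).comp t hb
      exact (h1.sub h2).hasDerivWithinAt
    · intro t ht
      rw [interior_Ici] at ht
      have ht0 : 0 < t := lt_of_le_of_lt ha.le ht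
      have htc : 0 < t + c := by linarith
      have h1 : (4 * (t + c)) ^ (p - 1) ≤ (4 * t + c) ^ (p - 1) :=
        Real.rpow_le_rpow_of_nonpos (by positivity) (by linarith) (by linarith)
      have h2 : (4 * (t + c)) ^ (p - 1) = 4 ^ (p - 1) * (t + c) ^ (p - 1) :=
        Real.mul_rpow (by norm_num) htc.le
      have h3 : (1 : ℝ) ≤ 4 ^ p := Real.one_le_rpow (by norm_num) hp.le
      have h4 : (4 : ℝ) ^ p = 4 * 4 ^ (p - 1) := by
        have h := Real.rpow_add (show (0:ℝ) < 4 by norm_num) 1 (p - 1)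
        rw [show (1 : ℝ) + (p - 1) = p by ring, Real.rpow_one] at h
        exact h
      have htcpow : 0 ≤ (t + c) ^ (p - 1) := Real.rpow_nonneg htc.le _
      have h5 : (t + c) ^ (p - 1) ≤ 4 * (4 * t + c) ^ (p - 1) := by nlinarith
      nlinarith [mul_le_mul_of_nonneg_left h5 hp.le]
  exact key Set.self_mem_Ici hab hab

theorem gap_aux_f_monotone_decreasing (α C : ℝ) (hα : 0 < α) (hα2 : α ≤ 2) :
    ∀ x₁ x₂ : ℝ, 0 < x₁ → x₁ ≤ x₂ →
      (4 * π ^ 2 / x₂ ^ 2 + C ^ 2) ^ (α / 2) - (π ^ 2 / x₂ ^ 2 + C ^ 2) ^ (α / 2)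
        ≤ (4 * π ^ 2 / x₁ ^ 2 + C ^ 2) ^ (α / 2) - (π ^ 2 / x₁ ^ 2 + C ^ 2) ^ (α / 2) := by
  intro x₁ x₂ hx₁ hx
  have hx₂ : 0 < x₂ := lt_of_lt_of_le hx₁ hx
  have hpi := Real.pi_pos
  have hp : 0 < α / 2 := by linarith
  have hp1 : α / 2 ≤ 1 := by linarith
  have hsq : x₁ ^ 2 ≤ x₂ ^ 2 := by nlinarith
  have ha : 0 < π ^ 2 / x₂ ^ 2 := by positivity
  have hab : π ^ 2 / x₂ ^ 2 ≤ π ^ 2 / x₁ ^ 2 :=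
    div_le_div_of_nonneg_left (by positivity) (by positivity) hsq
  have h := gap_aux_monotone (α / 2) (C ^ 2) hp hp1 (by positivity) ha hab
  have e₂ : 4 * (π ^ 2 / x₂ ^ 2) = 4 * π ^ 2 / x₂ ^ 2 := by ring
  have e₁ : 4 * (π ^ 2 / x₁ ^ 2) = 4 * π ^ 2 / x₁ ^ 2 := by ring
  rw [e₁, e₂] at h
  exact h
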